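/- arXiv:0801.2051 — 2 statements merged into one kernel-verified Lean document; each statement's English description precedes it below -/
import Mathlib

section
/- Let X be an infinite-dimensional Banach space with r_X = inf{q : X has cotype q}, and Y any Banach space. If 1 < p < r_X* and q > 1/(1/p − 1/r_X*), then Π_{q;p}(X;Y) = L(X;Y): every bounded linear operator from X to Y is absolutely (q;p)-summing. -/
open scoped ENNReal NNReal
open Finset

noncomputable section

/-- The weak `p`-norm of a finite family `x` in `X`:
`sup_{‖φ‖ ≤ 1} (∑ j |φ (x j)|^p)^(1/p)`. -/
def weakNorm (p : ℝ) {X : Type*} [NormedAddCommGroup X] [NormedSpace ℝ X]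
    {m : ℕ} (x : Fin m → X) : ℝ :=
  ⨆ φ : {φ : X →L[ℝ] ℝ // ‖φ‖ ≤ 1}, (∑ j, |φ.1 (x j)| ^ p) ^ (1 / p)

/-- `C` is an absolutely `(q;p)`-summing bound for `u`. -/
def piBound (q p : ℝ) {X Y : Type*} [NormedAddCommGroup X] [NormedSpace ℝ X]
    [NormedAddCommGroup Y] [NormedSpace ℝ Y] (u : X →L[ℝ] Y) (C : ℝ) : Prop :=
  0 ≤ C ∧ ∀ (m : ℕ) (x : Fin m → X),
    (∑ j, ‖u (x j)‖ ^ q) ^ (1 / q) ≤ C * weakNorm p x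

/-- `u` is absolutely `(q;p)`-summing. -/
def IsSumming (q p : ℝ) {X Y : Type*} [NormedAddCommGroup X] [NormedSpace ℝ X]
    [NormedAddCommGroup Y] [NormedSpace ℝ Y] (u : X →L[ℝ] Y) : Prop :=
  ∃ C, piBound q p u C

/-- The `(q;p)`-summing norm `π_{q;p}(u)` (least summing bound). -/
def summingNorm (q p : ℝ) {X Y : Type*} [NormedAddCommGroup X] [NormedSpace ℝ X]
    [NormedAddCommGroup Y] [NormedSpace ℝ Y] (u : X →L[ℝ] Y) : ℝ :=
  sInf {C | piBound q p u C}

/-- `Y` has cotype `q`. -/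
def HasCotype (q : ℝ) (Y : Type*) [NormedAddCommGroup Y] [NormedSpace ℝ Y] : Prop :=
  ∃ C > 0, ∀ (m : ℕ) (y : Fin m → Y),
    (∑ j, ‖y j‖ ^ q) ^ (1 / q) ≤
      C * ((1 / 2 ^ m : ℝ) *
        ∑ ε : Fin m → Bool, ‖∑ j, (if ε j then (1 : ℝ) else -1) • y j‖ ^ 2) ^ (1 / 2 : ℝ)

/-- `Y` has no finite cotype. -/
def NoFiniteCotype (Y : Type*) [NormedAddCommGroup Y] [NormedSpace ℝ Y] : Prop :=
  ∀ q : ℝ, 2 ≤ q → ¬ HasCotype q Y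

/-- `Z` is finitely representable in `X`. -/
def FinRep (Z X : Type*) [NormedAddCommGroup Z] [NormedSpace ℝ Z]
    [NormedAddCommGroup X] [NormedSpace ℝ X] : Prop :=
  ∀ (F : Submodule ℝ Z), FiniteDimensional ℝ F → ∀ ε : ℝ, 0 < ε →
    ∃ (E : Submodule ℝ X) (T : F ≃L[ℝ] E),
      ‖(T : F →L[ℝ] E)‖ * ‖(T.symm : E →L[ℝ] F)‖ ≤ 1 + ε

/-- `r_X = inf {q : X has cotype q}`, as an extended nonnegative real
(`∞` if `X` has no finite cotype). -/
def cotypeInf (X : Type*) [NormedAddCommGroup X] [NormedSpace ℝ X] : ℝ≥0∞ :=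
  sInf {r : ℝ≥0∞ | ∃ q : ℝ, 2 ≤ q ∧ HasCotype q X ∧ r = ENNReal.ofReal q}

section Aux
variable {X : Type*} [NormedAddCommGroup X] [NormedSpace ℝ X] {m : ℕ}

lemma weakNorm_nonneg (p : ℝ) (x : Fin m → X) : 0 ≤ weakNorm p x :=
  Real.iSup_nonneg fun _ =>
    Real.rpow_nonneg (Finset.sum_nonneg fun j _ => Real.rpow_nonneg (abs_nonneg _) _) _

lemma le_weakNorm {p : ℝ} (hp : 0 < p) (x : Fin m → X) (φ : X →L[ℝ] ℝ) (hφ : ‖φ‖ ≤ 1) :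
    (∑ j, |φ (x j)| ^ p) ^ (1 / p) ≤ weakNorm p x := by
  have hbdd : BddAbove (Set.range fun ψ : {ψ : X →L[ℝ] ℝ // ‖ψ‖ ≤ 1} =>
      (∑ j, |ψ.1 (x j)| ^ p) ^ (1 / p)) := by
    refine ⟨(∑ j, ‖x j‖ ^ p) ^ (1 / p), ?_⟩
    rintro _ ⟨ψ, rfl⟩
    refine Real.rpow_le_rpow (Finset.sum_nonneg fun j _ => Real.rpow_nonneg (abs_nonneg _) _)
      (Finset.sum_le_sum fun j _ => Real.rpow_le_rpow (abs_nonneg _) ?_ hp.le) (by positivity)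
    calc |ψ.1 (x j)| = ‖ψ.1 (x j)‖ := rfl
      _ ≤ ‖ψ.1‖ * ‖x j‖ := ψ.1.le_opNorm _
      _ ≤ 1 * ‖x j‖ := by gcongr; exact ψ.2
      _ = ‖x j‖ := one_mul _
  exact le_ciSup hbdd ⟨φ, hφ⟩

lemma sign_sum_le_weakNorm (x : Fin m → X) (ε : Fin m → Bool) :
    ‖∑ j, (if ε j then (1 : ℝ) else -1) • x j‖ ≤ weakNorm 1 x := by
  set v := ∑ j, (if ε j then (1 : ℝ) else -1) • x j with hv
  obtain ⟨g, hg1, hgv⟩ := exists_dual_vector'' ℝ v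
  calc ‖v‖ = g v := hgv.symm
    _ = ∑ j, (if ε j then (1 : ℝ) else -1) * g (x j) := by
        rw [hv, map_sum]; exact Finset.sum_congr rfl fun j _ => by rw [map_smul]; simp
    _ ≤ ∑ j, |g (x j)| := by
        refine Finset.sum_le_sum fun j _ => ?_
        cases hj : ε j <;> simp [neg_le_abs, le_abs_self]
    _ = (∑ j, |g (x j)| ^ (1 : ℝ)) ^ (1 / (1 : ℝ)) := by
        simp [Real.rpow_one]
    _ ≤ weakNorm 1 x := le_weakNorm one_pos x g hg1

end Aux


section Aux2
variable {X : Type*} [NormedAddCommGroup X] [NormedSpace ℝ X]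

/-- cotype s implies the identity is (s;1)-summing with the same constant. -/
lemma cotype_id_summing {s : ℝ} {C : ℝ} (hC : 0 < C)
    (h : ∀ (m : ℕ) (y : Fin m → X),
      (∑ j, ‖y j‖ ^ s) ^ (1 / s) ≤
        C * ((1 / 2 ^ m : ℝ) *
          ∑ ε : Fin m → Bool, ‖∑ j, (if ε j then (1 : ℝ) else -1) • y j‖ ^ 2) ^ (1 / 2 : ℝ))
    (m : ℕ) (x : Fin m → X) :
    (∑ j, ‖x j‖ ^ s) ^ (1 / s) ≤ C * weakNorm 1 x := by
  refine (h m x).trans ?_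
  have hw : (0 : ℝ) ≤ weakNorm 1 x := weakNorm_nonneg 1 x
  have key : (1 / 2 ^ m : ℝ) *
      ∑ ε : Fin m → Bool, ‖∑ j, (if ε j then (1 : ℝ) else -1) • x j‖ ^ 2
      ≤ (weakNorm 1 x) ^ 2 := by
    have hsum : ∑ ε : Fin m → Bool, ‖∑ j, (if ε j then (1 : ℝ) else -1) • x j‖ ^ 2
        ≤ ∑ _ε : Fin m → Bool, (weakNorm 1 x) ^ 2 := by
      refine Finset.sum_le_sum fun ε _ => ?_
      exact pow_le_pow_left₀ (norm_nonneg _) (sign_sum_le_weakNorm x ε) 2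
    have hcard : ∑ _ε : Fin m → Bool, (weakNorm 1 x) ^ 2 = (2 ^ m : ℝ) * (weakNorm 1 x) ^ 2 := by
      simp [Finset.sum_const, Finset.card_univ, mul_comm]
    calc (1 / 2 ^ m : ℝ) * ∑ ε : Fin m → Bool, ‖∑ j, (if ε j then (1 : ℝ) else -1) • x j‖ ^ 2
        ≤ (1 / 2 ^ m : ℝ) * ((2 ^ m : ℝ) * (weakNorm 1 x) ^ 2) := by
          rw [← hcard]; exact mul_le_mul_of_nonneg_left hsum (by positivity)
      _ = (weakNorm 1 x) ^ 2 := by field_simp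
  gcongr
  calc ((1 / 2 ^ m : ℝ) *
      ∑ ε : Fin m → Bool, ‖∑ j, (if ε j then (1 : ℝ) else -1) • x j‖ ^ 2) ^ (1 / 2 : ℝ)
      ≤ ((weakNorm 1 x) ^ 2) ^ (1 / 2 : ℝ) := by
        refine Real.rpow_le_rpow ?_ key (by norm_num)
        have : (0:ℝ) ≤ ∑ ε : Fin m → Bool, ‖∑ j, (if ε j then (1 : ℝ) else -1) • x j‖ ^ 2 :=
          Finset.sum_nonneg fun _ _ => sq_nonneg _
        positivity
    _ = weakNorm 1 x := by
        rw [← Real.rpow_natCast (weakNorm 1 x) 2, ← Real.rpow_mul hw]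
        norm_num

end Aux2

/-- ℓ^r ⊆ ℓ^t norm monotonicity for finite families, 0 < r ≤ t. -/
lemma lp_norm_mono {m : ℕ} (a : Fin m → ℝ) (ha : ∀ j, 0 ≤ a j) {r t : ℝ}
    (hr : 0 < r) (hrt : r ≤ t) :
    (∑ j, a j ^ t) ^ (1 / t) ≤ (∑ j, a j ^ r) ^ (1 / r) := by
  have ht : 0 < t := hr.trans_le hrt
  set A := (∑ j, a j ^ r) ^ (1 / r) with hA
  have hA0 : 0 ≤ A := Real.rpow_nonneg (Finset.sum_nonneg fun j _ => Real.rpow_nonneg (ha j) _) _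
  have hAr : A ^ r = ∑ j, a j ^ r := by
    rw [hA, one_div, Real.rpow_inv_rpow (Finset.sum_nonneg fun j _ => Real.rpow_nonneg (ha j) _)
      hr.ne']
  have hle : ∀ j, a j ≤ A := by
    intro j
    have h1 : a j ^ r ≤ A ^ r := by
      rw [hAr]; exact Finset.single_le_sum (fun i _ => Real.rpow_nonneg (ha i) _) (mem_univ j)
    calc a j = (a j ^ r) ^ (1 / r) := by rw [one_div, Real.rpow_rpow_inv (ha j) hr.ne']
      _ ≤ (A ^ r) ^ (1 / r) := Real.rpow_le_rpow (Real.rpow_nonneg (ha j) _) h1 (by positivity)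
      _ = A := by rw [one_div, Real.rpow_rpow_inv hA0 hr.ne']
  have hsum : ∑ j, a j ^ t ≤ A ^ t := by
    have : ∀ j, a j ^ t ≤ a j ^ r * A ^ (t - r) := by
      intro j
      have := Real.rpow_le_rpow (ha j) (hle j) (sub_nonneg.2 hrt)
      have htne : r + (t - r) ≠ 0 := by ring_nf; exact ht.ne'
      calc a j ^ t = a j ^ r * a j ^ (t - r) := by
            rw [← Real.rpow_add' (ha j) htne]; ring_nf
        _ ≤ a j ^ r * A ^ (t - r) := by
            exact mul_le_mul_of_nonneg_left this (Real.rpow_nonneg (ha j) _)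
    calc ∑ j, a j ^ t ≤ ∑ j, a j ^ r * A ^ (t - r) := Finset.sum_le_sum fun j _ => this j
      _ = (∑ j, a j ^ r) * A ^ (t - r) := by rw [← Finset.sum_mul]
      _ = A ^ r * A ^ (t - r) := by rw [hAr]
      _ = A ^ t := by rw [← Real.rpow_add' hA0 (by ring_nf; exact ht.ne')]; ring_nf
  calc (∑ j, a j ^ t) ^ (1 / t)
      ≤ (A ^ t) ^ (1 / t) := Real.rpow_le_rpow
        (Finset.sum_nonneg fun j _ => Real.rpow_nonneg (ha j) _) hsum (by positivity)
    _ = A := by rw [one_div, Real.rpow_rpow_inv hA0 ht.ne']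


lemma exists_good_cotype {X : Type*} [NormedAddCommGroup X] [NormedSpace ℝ X]
    {p q : ℝ} (hp : 1 < p) (hq : 0 < q)
    (hqgt : (ENNReal.ofReal q)⁻¹ + 1 < (ENNReal.ofReal p)⁻¹ + (cotypeInf X)⁻¹) :
    ∃ s : ℝ, 2 ≤ s ∧ HasCotype s X ∧ 1 / q + 1 < 1 / p + 1 / s := by
  by_contra hcon
  push_neg at hcon
  have hp0 : (0 : ℝ) < p := by linarith
  set c : ℝ := 1 / q + 1 - 1 / p with hc
  have hc0 : 0 < c := by
    have h1 : 1 / p < 1 := by rw [div_lt_one hp0]; exact hp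
    have h2 : 0 < 1 / q := by positivity
    simp only [hc]; linarith
  have hIge : ENNReal.ofReal (1 / c) ≤ cotypeInf X := by
    refine le_sInf ?_
    rintro r ⟨s, hs2, hsX, rfl⟩
    have hs0 : (0 : ℝ) < s := by linarith
    have h1 : 1 / s ≤ c := by have := hcon s hs2 hsX; simp only [hc]; linarith
    have h2 : 1 / c ≤ s := by
      rw [div_le_iff₀ hc0]
      rw [div_le_iff₀ hs0] at h1
      calc (1 : ℝ) ≤ c * s := h1
        _ = s * c := mul_comm _ _
    exact ENNReal.ofReal_le_ofReal h2
  have hIinv : (cotypeInf X)⁻¹ ≤ ENNReal.ofReal c := by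
    calc (cotypeInf X)⁻¹ ≤ (ENNReal.ofReal (1 / c))⁻¹ := ENNReal.inv_le_inv.2 hIge
      _ = ENNReal.ofReal c := by
          rw [one_div, ENNReal.ofReal_inv_of_pos hc0, inv_inv]
  have : (ENNReal.ofReal q)⁻¹ + 1 < (ENNReal.ofReal q)⁻¹ + 1 := by
    refine lt_of_lt_of_le hqgt ?_
    calc (ENNReal.ofReal p)⁻¹ + (cotypeInf X)⁻¹
        ≤ ENNReal.ofReal (1 / p) + ENNReal.ofReal c := by
          refine add_le_add ?_ hIinv
          rw [one_div, ENNReal.ofReal_inv_of_pos hp0]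
      _ = ENNReal.ofReal (1 / p + c) := (ENNReal.ofReal_add (by positivity) hc0.le).symm
      _ = ENNReal.ofReal (1 / q + 1) := by congr 1; simp only [hc]; ring
      _ = ENNReal.ofReal (1 / q) + ENNReal.ofReal 1 := ENNReal.ofReal_add (by positivity)
          zero_le_one
      _ = (ENNReal.ofReal q)⁻¹ + 1 := by
          rw [ENNReal.ofReal_one, one_div, ENNReal.ofReal_inv_of_pos hq]
  exact absurd this (lt_irrefl _)


theorem all_operators_summing_above_critical_exponent
    {X Y : Type*} [NormedAddCommGroup X] [NormedSpace ℝ X] [CompleteSpace X]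
    [NormedAddCommGroup Y] [NormedSpace ℝ Y] [CompleteSpace Y]
    (hX : ¬ FiniteDimensional ℝ X)
    (p q : ℝ) (hp : 1 < p) (hpq : p ≤ q)
    (hplt : 1 < (ENNReal.ofReal p)⁻¹ + (cotypeInf X)⁻¹)  -- `p < r_X*`
    (hqgt : (ENNReal.ofReal q)⁻¹ + 1 < (ENNReal.ofReal p)⁻¹ + (cotypeInf X)⁻¹)
      -- `q > 1 / (1/p - 1/r_X*)`
    :
    ∀ u : X →L[ℝ] Y, IsSumming q p u := by
  intro u
  have hq1 : 1 < q := lt_of_lt_of_le hp hpq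
  have hq0 : (0 : ℝ) < q := by linarith
  have hp0 : (0 : ℝ) < p := by linarith
  obtain ⟨s, hs2, hsX, hineq⟩ := exists_good_cotype hp hq0 hqgt
  have hs0 : (0 : ℝ) < s := by linarith
  obtain ⟨C, hC, hcot⟩ := hsX
  have hCu0 : (0 : ℝ) ≤ ‖u‖ * C := mul_nonneg (norm_nonneg u) hC.le
  have hid := cotype_id_summing hC hcot
  have hu : ∀ (k : ℕ) (y : Fin k → X),
      (∑ j, ‖u (y j)‖ ^ s) ^ (1 / s) ≤ (‖u‖ * C) * weakNorm 1 y := by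
    intro k y
    calc (∑ j, ‖u (y j)‖ ^ s) ^ (1 / s)
        ≤ (∑ j, (‖u‖ * ‖y j‖) ^ s) ^ (1 / s) := by
          refine Real.rpow_le_rpow
            (Finset.sum_nonneg fun j _ => Real.rpow_nonneg (norm_nonneg _) _)
            (Finset.sum_le_sum fun j _ =>
              Real.rpow_le_rpow (norm_nonneg _) (u.le_opNorm _) hs0.le) (by positivity)
      _ = ‖u‖ * (∑ j, ‖y j‖ ^ s) ^ (1 / s) := by
          have h1 : ∀ j, (‖u‖ * ‖y j‖) ^ s = ‖u‖ ^ s * ‖y j‖ ^ s := fun j =>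
            Real.mul_rpow (norm_nonneg u) (norm_nonneg _)
          simp_rw [h1, ← Finset.mul_sum]
          rw [Real.mul_rpow (Real.rpow_nonneg (norm_nonneg u) _)
            (Finset.sum_nonneg fun j _ => Real.rpow_nonneg (norm_nonneg _) _), one_div,
            Real.rpow_rpow_inv (norm_nonneg u) hs0.ne']
      _ ≤ ‖u‖ * (C * weakNorm 1 y) := mul_le_mul_of_nonneg_left (hid k y) (norm_nonneg u)
      _ = (‖u‖ * C) * weakNorm 1 y := by ring
  refine ⟨‖u‖ * C, hCu0, ?_⟩
  intro m x
  have hp1 : 1 / p < 1 := by rw [div_lt_one hp0]; exact hp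
  set ir : ℝ := 1 / s - 1 / q with hirdef
  have hir : 0 < ir := by
    have : 1 / q < 1 / s := by linarith
    simp only [hirdef]; linarith
  have hps : 1 - 1 / p < ir := by simp only [hirdef]; linarith
  set S : ℝ := ∑ j, ‖u (x j)‖ ^ q with hSdef
  have hS0 : (0 : ℝ) ≤ S :=
    Finset.sum_nonneg fun j _ => Real.rpow_nonneg (norm_nonneg _) _
  rcases eq_or_lt_of_le hS0 with hS | hS
  · rw [← hS, Real.zero_rpow (one_div_ne_zero hq0.ne')]
    exact mul_nonneg hCu0 (weakNorm_nonneg p x)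
  · set y : Fin m → X := fun j => (‖u (x j)‖ ^ (q * ir)) • x j with hy
    have huy : ∀ j, ‖u (y j)‖ = ‖u (x j)‖ ^ (q * ir) * ‖u (x j)‖ := by
      intro j
      have h1 : u (y j) = (‖u (x j)‖ ^ (q * ir)) • u (x j) := by
        simp [hy, map_smul]
      rw [h1, norm_smul, Real.norm_eq_abs,
        abs_of_nonneg (Real.rpow_nonneg (norm_nonneg _) _)]
    have hys : ∀ j, ‖u (y j)‖ ^ s = ‖u (x j)‖ ^ q := by
      intro j
      rw [huy j]
      rcases eq_or_lt_of_le (norm_nonneg (u (x j))) with h0 | h0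
      · rw [← h0, Real.zero_rpow (by positivity : q * ir ≠ 0), mul_zero,
          Real.zero_rpow hs0.ne', Real.zero_rpow hq0.ne']
      · have e1 : ‖u (x j)‖ ^ (q * ir) * ‖u (x j)‖ = ‖u (x j)‖ ^ (q * ir + 1) := by
          rw [Real.rpow_add h0, Real.rpow_one]
        rw [e1, ← Real.rpow_mul (norm_nonneg _)]
        congr 1
        simp only [hirdef]
        field_simp
        try ring
    have h1 : S ^ (1 / s) ≤ (‖u‖ * C) * weakNorm 1 y := by
      have h := hu m y
      have hsum : ∑ j, ‖u (y j)‖ ^ s = S := by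
        rw [hSdef]; exact Finset.sum_congr rfl fun j _ => hys j
      rwa [hsum] at h
    have h2 : weakNorm 1 y ≤ S ^ ir * weakNorm p x := by
      have hne : Nonempty {φ : X →L[ℝ] ℝ // ‖φ‖ ≤ 1} := ⟨⟨0, by simp⟩⟩
      refine ciSup_le fun φ => ?_
      have hsimp : (∑ j, |φ.1 (y j)| ^ (1 : ℝ)) ^ (1 / (1 : ℝ)) = ∑ j, |φ.1 (y j)| := by
        simp [Real.rpow_one]
      rw [hsimp]
      have hconj : Real.HolderConjugate (p / (p - 1)) p :=
        (Real.HolderConjugate.conjExponent hp).symm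
      have hp'1 : 1 < p / (p - 1) := hconj.lt
      have hp'0 : 0 < p / (p - 1) := hconj.left_pos
      calc ∑ j, |φ.1 (y j)|
          = ∑ j, (‖u (x j)‖ ^ (q * ir)) * |φ.1 (x j)| := by
            refine Finset.sum_congr rfl fun j _ => ?_
            rw [hy]
            simp only [map_smul, smul_eq_mul, abs_mul,
              abs_of_nonneg (Real.rpow_nonneg (norm_nonneg _) _)]
        _ ≤ (∑ j, (‖u (x j)‖ ^ (q * ir)) ^ (p / (p - 1))) ^ (1 / (p / (p - 1))) *
              (∑ j, |φ.1 (x j)| ^ p) ^ (1 / p) :=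
            Real.inner_le_Lp_mul_Lq_of_nonneg univ hconj
              (fun j _ => Real.rpow_nonneg (norm_nonneg _) _) (fun j _ => abs_nonneg _)
        _ ≤ S ^ ir * weakNorm p x := by
            refine mul_le_mul ?_ (le_weakNorm hp0 x φ.1 φ.2)
              (Real.rpow_nonneg (Finset.sum_nonneg fun j _ => Real.rpow_nonneg (abs_nonneg _) _) _)
              (Real.rpow_nonneg hS0 _)
            have hrle : 1 / ir ≤ p / (p - 1) := by
              have hinvp' : 1 / (p / (p - 1)) < ir := by
                have : 1 / (p / (p - 1)) = 1 - 1 / p := by field_simp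
                rw [this]; exact hps
              rw [one_div_le hir hp'0]
              exact hinvp'.le
            have hmono := lp_norm_mono (fun j => ‖u (x j)‖ ^ (q * ir))
              (fun j => Real.rpow_nonneg (norm_nonneg _) _) (by positivity : (0:ℝ) < 1 / ir) hrle
            have hSr : (∑ j, (‖u (x j)‖ ^ (q * ir)) ^ (1 / ir)) = S := by
              rw [hSdef]
              refine Finset.sum_congr rfl fun j _ => ?_
              rw [← Real.rpow_mul (norm_nonneg _)]
              congr 1
              field_simp
            calc (∑ j, (‖u (x j)‖ ^ (q * ir)) ^ (p / (p - 1))) ^ (1 / (p / (p - 1)))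
                ≤ (∑ j, (‖u (x j)‖ ^ (q * ir)) ^ (1 / ir)) ^ (1 / (1 / ir)) := hmono
              _ = S ^ ir := by rw [hSr, one_div_one_div]
    have h3 : S ^ (1 / s) = S ^ (1 / q) * S ^ ir := by
      rw [← Real.rpow_add hS]
      congr 1
      simp only [hirdef]; ring
    have h4 : S ^ (1 / q) * S ^ ir ≤ ((‖u‖ * C) * weakNorm p x) * S ^ ir := by
      calc S ^ (1 / q) * S ^ ir = S ^ (1 / s) := h3.symm
        _ ≤ (‖u‖ * C) * (S ^ ir * weakNorm p x) :=
            h1.trans (mul_le_mul_of_nonneg_left h2 hCu0)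
        _ = ((‖u‖ * C) * weakNorm p x) * S ^ ir := by ring
    exact le_of_mul_le_mul_right h4 (Real.rpow_pos_of_pos hS ir)
end
end

section
/- Let X₁, X₂, Y be Banach spaces and p₁, p₂ ≥ 1. If every continuous bilinear map A : X₁ × X₂ → Y is (p₁,p₂)-dominated, then every continuous linear operator from X₁ to L(X₂;Y) is absolutely p₁-summing. -/
open scoped ENNReal NNReal
open Finset

noncomputable section

/-- A sequence `x` in `X` is weakly `p`-summable. -/
def WeaklySummable (p : ℝ) {X : Type*} [NormedAddCommGroup X] [NormedSpace ℝ X]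
    (x : ℕ → X) : Prop :=
  ∀ φ : X →L[ℝ] ℝ, Summable fun j => |φ (x j)| ^ p

/-- `u` is absolutely `p`-summing (sequential definition). -/
def SeqPSumming (p : ℝ) {X Y : Type*} [NormedAddCommGroup X] [NormedSpace ℝ X]
    [NormedAddCommGroup Y] [NormedSpace ℝ Y] (u : X →L[ℝ] Y) : Prop :=
  ∀ x : ℕ → X, WeaklySummable p x → Summable fun j => ‖u (x j)‖ ^ p

/-- A continuous bilinear map `A : X₁ × X₂ → Y` is `(p₁,p₂)`-dominated, where
`1/q = 1/p₁ + 1/p₂`. -/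
def Dominated (p₁ p₂ : ℝ) {X₁ X₂ Y : Type*}
    [NormedAddCommGroup X₁] [NormedSpace ℝ X₁]
    [NormedAddCommGroup X₂] [NormedSpace ℝ X₂]
    [NormedAddCommGroup Y] [NormedSpace ℝ Y]
    (A : X₁ →L[ℝ] X₂ →L[ℝ] Y) : Prop :=
  ∀ (x₁ : ℕ → X₁) (x₂ : ℕ → X₂), WeaklySummable p₁ x₁ → WeaklySummable p₂ x₂ →
    Summable fun j => ‖A (x₁ j) (x₂ j)‖ ^ (1 / p₁ + 1 / p₂)⁻¹


open Filter in
private lemma key_multiplier (p₁ p₂ : ℝ) (hp₁ : 1 ≤ p₁) (hp₂ : 1 ≤ p₂) (b : ℕ → ℝ)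
    (hb : ∀ j, 0 ≤ b j)
    (H : ∀ a : ℕ → ℝ, (∀ j, 0 ≤ a j) → Summable (fun j => a j ^ p₂) →
      Summable (fun j => (a j * b j) ^ (1 / p₁ + 1 / p₂)⁻¹)) :
    Summable fun j => b j ^ p₁ := by
  have hp₁0 : (0:ℝ) < p₁ := lt_of_lt_of_le one_pos hp₁
  have hp₂0 : (0:ℝ) < p₂ := lt_of_lt_of_le one_pos hp₂
  set q : ℝ := (1 / p₁ + 1 / p₂)⁻¹ with hqdef
  have hq0 : 0 < q := by positivity
  have hqsum : q / p₁ + q / p₂ = 1 := by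
    rw [hqdef]; field_simp
  by_contra hcon
  set c : ℕ → ℝ := fun j => b j ^ p₁ with hc
  have hc0 : ∀ j, 0 ≤ c j := fun j => Real.rpow_nonneg (hb j) _
  have hS : Tendsto (fun n => ∑ j ∈ range n, c j) atTop atTop :=
    (not_summable_iff_tendsto_nat_atTop_of_nonneg hc0).1 hcon
  have hstep : ∀ (m : ℕ) (M : ℝ), ∃ m', m < m' ∧ M ≤ ∑ j ∈ Finset.Ico m m', c j := by
    intro m M
    obtain ⟨N, hN⟩ := (tendsto_atTop.1 hS (∑ j ∈ range m, c j + M)).exists_forall_of_atTop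
    refine ⟨max N (m+1), lt_of_lt_of_le (Nat.lt_succ_self m) (le_max_right _ _), ?_⟩
    have hmle : m ≤ max N (m+1) := le_trans (Nat.le_succ m) (le_max_right _ _)
    rw [sum_Ico_eq_sub _ hmle]
    have := hN (max N (m+1)) (le_max_left _ _)
    linarith
  choose f hf1 hf2 using hstep
  set M : ℕ → ℝ := fun k => (((k:ℝ)+1)^2) ^ (p₁/p₂) with hM
  set n : ℕ → ℕ := fun k => Nat.rec 0 (fun k nk => f nk (M k)) k with hn
  have hn0 : n 0 = 0 := rfl
  have hnsucc : ∀ k, n (k+1) = f (n k) (M k) := fun k => rfl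
  have hmono : StrictMono n := strictMono_nat_of_lt_succ fun k => by
    rw [hnsucc]; exact hf1 _ _
  set σ : ℕ → ℝ := fun k => ∑ j ∈ Finset.Ico (n k) (n (k+1)), c j with hσ
  have hσM : ∀ k, M k ≤ σ k := fun k => by
    rw [hσ]; simpa [hnsucc] using hf2 (n k) (M k)
  have hM0 : ∀ k, 0 < M k := fun k => Real.rpow_pos_of_pos (by positivity) _
  have hσ0 : ∀ k, 0 < σ k := fun k => lt_of_lt_of_le (hM0 k) (hσM k)
  set w : ℕ → ℝ := fun k => ((k:ℝ)+1)^2 * σ k with hw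
  have hw0 : ∀ k, 0 < w k := fun k => mul_pos (by positivity) (hσ0 k)
  have hex : ∀ j, ∃ k, j < n (k+1) :=
    fun j => ⟨j, lt_of_lt_of_le (Nat.lt_succ_self j) hmono.le_apply⟩
  set K : ℕ → ℕ := fun j => Nat.find (hex j) with hK
  have hK2 : ∀ j, j < n (K j + 1) := fun j => Nat.find_spec (hex j)
  have hKuniq : ∀ k j, n k ≤ j → j < n (k+1) → K j = k := by
    intro k j h1 h2
    have hle : K j ≤ k := Nat.find_le h2
    rcases eq_or_lt_of_le hle with h | h
    · exact h
    · exact absurd (lt_of_lt_of_le (hK2 j) (hmono.monotone h)) (not_lt.2 h1)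
  set a : ℕ → ℝ := fun j => (c j / w (K j)) ^ p₂⁻¹ with ha
  have ha0 : ∀ j, 0 ≤ a j := fun j => Real.rpow_nonneg (div_nonneg (hc0 j) (hw0 _).le) _
  have hap : ∀ j, a j ^ p₂ = c j / w (K j) := fun j =>
    Real.rpow_inv_rpow (div_nonneg (hc0 j) (hw0 _).le) (ne_of_gt hp₂0)
  have hrange : ∀ (g : ℕ → ℝ) (N : ℕ),
      ∑ j ∈ range (n N), g j = ∑ k ∈ range N, ∑ j ∈ Finset.Ico (n k) (n (k+1)), g j := by
    intro g N
    induction N with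
    | zero => simp [hn0]
    | succ N ih =>
      rw [sum_range_succ, ← ih, range_eq_Ico, range_eq_Ico]
      exact (sum_Ico_consecutive g (Nat.zero_le (n N)) (hmono (Nat.lt_succ_self N)).le).symm
  set g : ℕ → ℝ := fun k => (((k:ℝ)+1)^2)⁻¹ with hg
  have hgsum : Summable g := by
    have h1 : Summable (fun n : ℕ => 1 / (n:ℝ)^2) := Real.summable_one_div_nat_pow.2 one_lt_two
    have h2 := (summable_nat_add_iff 1).2 h1
    apply h2.congr
    intro k
    push_cast
    rw [hg, one_div]
  have hblocka : ∀ k, ∑ j ∈ Finset.Ico (n k) (n (k+1)), a j ^ p₂ = g k := by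
    intro k
    have heq : ∀ j ∈ Finset.Ico (n k) (n (k+1)), a j ^ p₂ = c j / w k := by
      intro j hj
      rw [Finset.mem_Ico] at hj
      rw [hap, hKuniq k j hj.1 hj.2]
    rw [Finset.sum_congr rfl heq, ← Finset.sum_div]
    show σ k / w k = g k
    simp only [hw, hg]
    rw [mul_comm, div_mul_eq_div_div, div_self (hσ0 k).ne', one_div]
  have hsa : Summable (fun j => a j ^ p₂) := by
    apply summable_of_sum_range_le (c := ∑' k, g k)
      (fun j => Real.rpow_nonneg (ha0 j) _)
    intro N
    calc ∑ j ∈ range N, a j ^ p₂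
        ≤ ∑ j ∈ range (n N), a j ^ p₂ := by
          apply Finset.sum_le_sum_of_subset_of_nonneg
          · exact Finset.range_subset_range.2 hmono.le_apply
          · exact fun j _ _ => Real.rpow_nonneg (ha0 j) _
      _ = ∑ k ∈ range N, g k := by
          rw [hrange]; exact Finset.sum_congr rfl fun k _ => hblocka k
      _ ≤ ∑' k, g k := Summable.sum_le_tsum _ (fun k _ => by rw [hg]; positivity) hgsum
  have hs : Summable (fun j => (a j * b j) ^ q) := H a ha0 hsa
  have hs0 : ∀ j, 0 ≤ (a j * b j) ^ q := fun j =>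
    Real.rpow_nonneg (mul_nonneg (ha0 j) (hb j)) _
  have hsval : ∀ k j, n k ≤ j → j < n (k+1) →
      (a j * b j) ^ q = c j / w k ^ (q / p₂) := by
    intro k j h1 h2
    have hcj := hc0 j
    have hwk := (hw0 k).le
    have hbj : b j = c j ^ p₁⁻¹ := (Real.rpow_rpow_inv (hb j) (ne_of_gt hp₁0)).symm
    have hcc : c j ^ (q/p₂) * c j ^ (q/p₁) = c j := by
      rw [← Real.rpow_add' hcj (by rw [add_comm, hqsum]; norm_num), add_comm, hqsum,
        Real.rpow_one]
    rw [Real.mul_rpow (ha0 j) (hb j)]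
    simp only [ha]
    rw [hKuniq k j h1 h2, hbj, ← Real.rpow_mul (div_nonneg hcj hwk), ← Real.rpow_mul hcj,
      inv_mul_eq_div, inv_mul_eq_div, Real.div_rpow hcj hwk, div_mul_eq_mul_div, hcc]
  have hblocks : ∀ k, (1:ℝ) ≤ ∑ j ∈ Finset.Ico (n k) (n (k+1)), (a j * b j) ^ q := by
    intro k
    have heq : ∑ j ∈ Finset.Ico (n k) (n (k+1)), (a j * b j) ^ q = σ k / w k ^ (q/p₂) := by
      have heq2 : ∀ j ∈ Finset.Ico (n k) (n (k+1)), (a j * b j) ^ q = c j / w k ^ (q/p₂) := by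
        intro j hj
        rw [Finset.mem_Ico] at hj
        exact hsval k j hj.1 hj.2
      rw [Finset.sum_congr rfl heq2, ← Finset.sum_div]
    rw [heq, le_div_iff₀ (Real.rpow_pos_of_pos (hw0 k) _), one_mul, hw,
      Real.mul_rpow (by positivity) (hσ0 k).le]
    have hexp : (p₁/p₂) * (q/p₁) = q/p₂ := by field_simp
    have key : (((k:ℝ)+1)^2) ^ (q/p₂) ≤ σ k ^ (q/p₁) := by
      calc (((k:ℝ)+1)^2) ^ (q/p₂) = (M k) ^ (q/p₁) := by
            rw [hM, ← Real.rpow_mul (by positivity), hexp]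
        _ ≤ σ k ^ (q/p₁) := Real.rpow_le_rpow (hM0 k).le (hσM k) (by positivity)
    have hσσ : σ k ^ (q/p₁) * σ k ^ (q/p₂) = σ k := by
      rw [← Real.rpow_add (hσ0 k), hqsum, Real.rpow_one]
    calc (((k:ℝ)+1)^2) ^ (q/p₂) * σ k ^ (q/p₂)
        ≤ σ k ^ (q/p₁) * σ k ^ (q/p₂) :=
          mul_le_mul_of_nonneg_right key (Real.rpow_nonneg (hσ0 k).le _)
      _ = σ k := hσσ
  obtain ⟨N, hN⟩ := exists_nat_gt (∑' j, (a j * b j) ^ q)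
  have hfin : (N:ℝ) ≤ ∑' j, (a j * b j) ^ q := by
    calc (N:ℝ) = ∑ _k ∈ range N, (1:ℝ) := by simp
      _ ≤ ∑ k ∈ range N, ∑ j ∈ Finset.Ico (n k) (n (k+1)), (a j * b j) ^ q :=
          Finset.sum_le_sum (fun k _ => hblocks k)
      _ = ∑ j ∈ range (n N), (a j * b j) ^ q := (hrange _ N).symm
      _ ≤ ∑' j, (a j * b j) ^ q := Summable.sum_le_tsum _ (fun j _ => hs0 j) hs
  exact absurd hN (not_lt.2 hfin)

theorem linear_summing_of_all_bilinear_dominated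
    {X₁ X₂ Y : Type*} [NormedAddCommGroup X₁] [NormedSpace ℝ X₁] [CompleteSpace X₁]
    [NormedAddCommGroup X₂] [NormedSpace ℝ X₂] [CompleteSpace X₂]
    [NormedAddCommGroup Y] [NormedSpace ℝ Y] [CompleteSpace Y]
    (p₁ p₂ : ℝ) (hp₁ : 1 ≤ p₁) (hp₂ : 1 ≤ p₂)
    (h : ∀ A : X₁ →L[ℝ] X₂ →L[ℝ] Y, Dominated p₁ p₂ A) :
    ∀ u : X₁ →L[ℝ] (X₂ →L[ℝ] Y), SeqPSumming p₁ u := by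
  intro u x hx
  have hp₁0 : (0:ℝ) < p₁ := lt_of_lt_of_le one_pos hp₁
  have hp₂0 : (0:ℝ) < p₂ := lt_of_lt_of_le one_pos hp₂
  have hq0 : (0:ℝ) < (1 / p₁ + 1 / p₂)⁻¹ := by positivity
  have hz : ∀ j, ∃ z : X₂, ‖z‖ ≤ 1 ∧ ‖u (x j)‖ ≤ 2 * ‖u (x j) z‖ := by
    intro j
    rcases eq_or_lt_of_le (norm_nonneg (u (x j))) with h0 | hpos
    · exact ⟨0, by simp, by simp [← h0]⟩
    · have hlt : ‖u (x j)‖ / 2 < ‖u (x j)‖ := half_lt_self hpos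
      obtain ⟨z, hz1, hz2⟩ := (u (x j)).exists_lt_apply_of_lt_opNorm hlt
      exact ⟨z, hz1.le, by linarith⟩
  choose z hz1 hz2 using hz
  apply key_multiplier p₁ p₂ hp₁ hp₂ _ (fun j => norm_nonneg _)
  intro a ha0 hap₂
  have hx₂ : WeaklySummable p₂ (fun j => a j • z j) := by
    intro φ
    apply Summable.of_nonneg_of_le (fun j => by positivity) _ (hap₂.mul_left (‖φ‖ ^ p₂))
    intro j
    have hb : |φ (a j • z j)| ≤ ‖φ‖ * a j := by
      calc |φ (a j • z j)| ≤ ‖φ‖ * ‖a j • z j‖ := φ.le_opNorm _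
        _ = ‖φ‖ * (|a j| * ‖z j‖) := by rw [norm_smul, Real.norm_eq_abs]
        _ ≤ ‖φ‖ * (|a j| * 1) := by
            apply mul_le_mul_of_nonneg_left _ (norm_nonneg φ)
            exact mul_le_mul_of_nonneg_left (hz1 j) (abs_nonneg _)
        _ = ‖φ‖ * a j := by rw [mul_one, abs_of_nonneg (ha0 j)]
    calc |φ (a j • z j)| ^ p₂ ≤ (‖φ‖ * a j) ^ p₂ :=
          Real.rpow_le_rpow (abs_nonneg _) hb hp₂0.le
      _ = ‖φ‖ ^ p₂ * a j ^ p₂ := Real.mul_rpow (norm_nonneg _) (ha0 j)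
  have hdom := h u x (fun j => a j • z j) hx hx₂
  apply Summable.of_nonneg_of_le
    (fun j => Real.rpow_nonneg (mul_nonneg (ha0 j) (norm_nonneg _)) _) _
    (hdom.mul_left ((2:ℝ) ^ (1 / p₁ + 1 / p₂)⁻¹))
  intro j
  have h1 : a j * ‖u (x j)‖ ≤ 2 * ‖u (x j) (a j • z j)‖ := by
    rw [map_smul, norm_smul, Real.norm_eq_abs, abs_of_nonneg (ha0 j)]
    calc a j * ‖u (x j)‖ ≤ a j * (2 * ‖u (x j) (z j)‖) :=
          mul_le_mul_of_nonneg_left (hz2 j) (ha0 j)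
      _ = 2 * (a j * ‖u (x j) (z j)‖) := by ring
  calc (a j * ‖u (x j)‖) ^ (1 / p₁ + 1 / p₂)⁻¹
      ≤ (2 * ‖u (x j) (a j • z j)‖) ^ (1 / p₁ + 1 / p₂)⁻¹ :=
        Real.rpow_le_rpow (mul_nonneg (ha0 j) (norm_nonneg _)) h1 hq0.le
    _ = (2:ℝ) ^ (1 / p₁ + 1 / p₂)⁻¹ * ‖u (x j) (a j • z j)‖ ^ (1 / p₁ + 1 / p₂)⁻¹ :=
        Real.mul_rpow (by norm_num) (norm_nonneg _)
end
end
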